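/- Let s_1,…,s_k be positive integers with s_1+⋯+s_k = n, and for each j let x_j be uniform on the (s_j+1)-th roots of unity, independently. For a function σ : [n] → [k], the expectation E[(conj(x_1)^{s_1}⋯conj(x_k)^{s_k})(x_{σ(1)}⋯x_{σ(n)})] equals 1 if |{i : σ(i)=j}| = s_j for all j ∈ [k], and equals 0 otherwise. -/
import Mathlib


/-- `root m t = e^{2πit/m}`, the `t`-th among the `m`-th roots of unity. -/
noncomputable def root (m t : ℕ) : ℂ :=
  Complex.exp (2 * Real.pi * Complex.I * t / m)


lemma root_eq_pow (m t : ℕ) : root m t = root m 1 ^ t := by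
  rw [root, root, ← Complex.exp_nat_mul]
  congr 1
  push_cast
  ring

lemma conj_root (m t : ℕ) : (starRingEnd ℂ) (root m t) = root m 1 ^ (-(t:ℤ)) := by
  rw [root, ← Complex.exp_conj]
  rw [zpow_neg, zpow_natCast, ← root_eq_pow, root, ← Complex.exp_neg]
  congr 1
  simp only [map_div₀, map_mul, Complex.conj_I, Complex.conj_ofReal, map_natCast, map_ofNat]
  ring

lemma prim (m : ℕ) (hm : m ≠ 0) : IsPrimitiveRoot (root m 1) m := by
  have := Complex.isPrimitiveRoot_exp m hm
  convert this using 2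
  rw [root]
  push_cast
  ring

lemma geom_inner (m : ℕ) (hm : m ≠ 0) (a : ℤ) :
    ∑ t : Fin m, root m 1 ^ ((t : ℤ) * a) = if (m:ℤ) ∣ a then (m : ℂ) else 0 := by
  have hp := prim m hm
  have hroot : root m 1 ^ (m : ℤ) = 1 := by
    rw [zpow_natCast, hp.pow_eq_one]
  by_cases h : (m:ℤ) ∣ a
  · have hone : root m 1 ^ a = 1 := (hp.zpow_eq_one_iff_dvd a).2 h
    simp only [if_pos h]
    have : ∀ t : Fin m, root m 1 ^ ((t:ℤ) * a) = 1 := by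
      intro t
      rw [mul_comm, zpow_mul, hone, one_zpow]
    simp [this]
  · simp only [if_neg h]
    set w := root m 1 ^ a with hw
    have hwne : w ≠ 1 := fun hc => h ((hp.zpow_eq_one_iff_dvd a).1 hc)
    have hwm : w ^ m = 1 := by
      rw [hw, ← zpow_natCast, ← zpow_mul, mul_comm, zpow_mul, hroot, one_zpow]
    calc ∑ t : Fin m, root m 1 ^ ((t:ℤ) * a)
        = ∑ t : Fin m, w ^ (t : ℕ) := by
          refine Finset.sum_congr rfl fun t _ => ?_
          rw [mul_comm, zpow_mul, hw, zpow_natCast]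
      _ = ∑ i ∈ Finset.range m, w ^ i := Fin.sum_univ_eq_sum_range _ _
      _ = (w ^ m - 1) / (w - 1) := geom_sum_eq hwne m
      _ = 0 := by rw [hwm, sub_self, zero_div]

/-- Let `s_1,…,s_k > 0` sum to `n`, and for each `j` let `x_j` be uniform on the
`(s_j+1)`-th roots of unity, independently (parametrized by exponents `f j`).
For `σ : [n] → [k]`, the expectation `E[(conj(x_1)^{s_1}⋯conj(x_k)^{s_k})(x_{σ(1)}⋯x_{σ(n)})]`
is `1` if `|{i : σ(i) = j}| = s_j` for all `j`, and `0` otherwise. -/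
theorem expectation_roots_product (n k : ℕ) (s : Fin k → ℕ)
    (hpos : ∀ j, 0 < s j) (hsum : ∑ j, s j = n) (σ : Fin n → Fin k) :
    (∑ f : (∀ j, Fin (s j + 1)),
        (∏ j, (starRingEnd ℂ) (root (s j + 1) (f j)) ^ s j) *
          ∏ i, root (s (σ i) + 1) (f (σ i)))
        / (∏ j, ((s j : ℂ) + 1))
      = if ∀ j, (Finset.univ.filter fun i => σ i = j).card = s j then 1 else 0 := by
  classical
  set c : Fin k → ℕ := fun j => (Finset.univ.filter fun i => σ i = j).card with hc
  have hne : ∀ j, root (s j + 1) 1 ≠ 0 := fun j => Complex.exp_ne_zero _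
  -- Step 1: rewrite summand as a product of zpowers
  have hsummand : ∀ f : (∀ j, Fin (s j + 1)),
      (∏ j, (starRingEnd ℂ) (root (s j + 1) (f j)) ^ s j) *
        ∏ i, root (s (σ i) + 1) (f (σ i))
      = ∏ j, root (s j + 1) 1 ^ ((f j : ℤ) * ((c j : ℤ) - s j)) := by
    intro f
    have h2 : ∏ i, root (s (σ i) + 1) (f (σ i)) = ∏ j, root (s j + 1) (f j) ^ c j := by
      rw [← Finset.prod_fiberwise_of_maps_to (fun i _ => Finset.mem_univ (σ i))
        (fun i => root (s (σ i) + 1) (f (σ i)))]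
      refine Finset.prod_congr rfl fun j _ => ?_
      have hfib : ∀ i ∈ Finset.filter (fun i => σ i = j) Finset.univ,
          root (s (σ i) + 1) (f (σ i)) = root (s j + 1) (f j) := by
        intro i hi
        rw [Finset.mem_filter] at hi
        rw [hi.2]
      rw [Finset.prod_congr rfl hfib, Finset.prod_const]
    rw [h2, ← Finset.prod_mul_distrib]
    refine Finset.prod_congr rfl fun j _ => ?_
    rw [conj_root, root_eq_pow (s j + 1) (f j), ← zpow_natCast (root (s j + 1) 1 ^ (-((f j : ℕ) : ℤ))),
      ← zpow_mul, ← zpow_natCast (root (s j + 1) 1 ^ ((f j : ℕ))), ← zpow_natCast (root (s j + 1) 1),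
      ← zpow_mul, ← zpow_add₀ (hne j)]
    congr 1
    ring
  rw [Finset.sum_congr rfl fun f _ => hsummand f]
  have hswap : ∑ f : (∀ j, Fin (s j + 1)), ∏ j, root (s j + 1) 1 ^ ((f j : ℤ) * ((c j : ℤ) - s j))
      = ∏ j, ∑ t : Fin (s j + 1), root (s j + 1) 1 ^ ((t : ℤ) * ((c j : ℤ) - s j)) := by
    rw [Finset.prod_univ_sum (fun j => (Finset.univ : Finset (Fin (s j + 1))))
      (fun j t => root (s j + 1) 1 ^ ((t : ℤ) * ((c j : ℤ) - s j))), Fintype.piFinset_univ]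
  rw [hswap, Finset.prod_congr rfl fun j _ => geom_inner (s j + 1) (Nat.succ_ne_zero _)
    ((c j : ℤ) - s j)]
  by_cases hP : ∀ j, c j = s j
  · rw [if_pos hP]
    have : ∀ j ∈ Finset.univ, (if ((s j + 1 : ℕ) : ℤ) ∣ (c j : ℤ) - s j then ((s j + 1 : ℕ) : ℂ) else 0)
        = ((s j : ℂ) + 1) := by
      intro j _
      rw [if_pos (by rw [hP j]; simp)]
      push_cast
      ring
    rw [Finset.prod_congr rfl this]
    rw [div_self]
    rw [Finset.prod_ne_zero_iff]
    intro j _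
    have : ((s j : ℂ) + 1) = ((s j + 1 : ℕ) : ℂ) := by push_cast; ring
    rw [this]
    exact_mod_cast Nat.succ_ne_zero (s j)
  · rw [if_neg hP]
    -- there is some j where the divisibility fails
    have hexists : ∃ j, ¬ (((s j + 1 : ℕ) : ℤ) ∣ (c j : ℤ) - s j) := by
      by_contra hall
      push_neg at hall
      have hle : ∀ j, s j ≤ c j := by
        intro j
        by_contra hlt
        push_neg at hlt
        have habs : |(c j : ℤ) - s j| < ((s j + 1 : ℕ) : ℤ) := by
          rw [abs_lt]; constructor <;> omega
        have := Int.eq_zero_of_abs_lt_dvd (hall j) habs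
        omega
      have hsumc : ∑ j, c j = n := by
        have := Finset.card_eq_sum_card_fiberwise (f := σ) (s := Finset.univ)
          (t := Finset.univ) (fun i _ => Finset.mem_univ (σ i))
        simp only [Finset.card_univ, Fintype.card_fin] at this
        exact this.symm
      have heq := (Finset.sum_eq_sum_iff_of_le (fun j _ => hle j)).1 (by rw [hsum, hsumc])
      exact hP fun j => (heq j (Finset.mem_univ j)).symm
    obtain ⟨j0, hj0⟩ := hexists
    rw [Finset.prod_eq_zero (f := fun j => if ((s j + 1 : ℕ) : ℤ) ∣ (c j : ℤ) - s j then ((s j + 1 : ℕ) : ℂ) else 0) (Finset.mem_univ j0) (if_neg hj0), zero_div]
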